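/- Let X = [0,2] × ℤ₂, where [0,2] ⊆ ℝ has its usual metric, ℤ₂ = {0,1} has the discrete metric, and X has the product metric uniformity, and let Y = [0,2] with its usual metric uniformity. Define f : X → Y by f(q,0) = q and f(q,1) = q/2. Then: (i) f is a uniformly continuous surjection; (ii) for every entourage E of X, the image (f×f)(E) is an entourage of Y (f is bi-uniformly continuous); (iii) the set [0,2] × {1} is uniformly open in X; and (iv) its image f([0,2] × {1}) = [0,1] is not open in Y. -/

import Mathlib

/-- A subset `A` of a uniform space `X` is *uniformly open* if there is an entourage `E`
of `X` such that for every `a ∈ A` the ball `B(a,E) = {y | (a,y) ∈ E}` is contained in `A`. -/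
def UniformlyOpen {X : Type*} [UniformSpace X] (A : Set X) : Prop :=
  ∃ E ∈ uniformity X, ∀ a ∈ A, UniformSpace.ball a E ⊆ A

/-- `ℤ₂ = {0,1}` with the discrete metric; its uniformity is the discrete (bottom)
uniformity. -/
instance : UniformSpace (Fin 2) := ⊥

/-- The map `f : [0,2] × ℤ₂ → [0,2]` given by `f(q,0) = q` and `f(q,1) = q/2`. -/
noncomputable def f82 (p : Set.Icc (0 : ℝ) 2 × Fin 2) : Set.Icc (0 : ℝ) 2 :=
  if p.2 = 0 then p.1
  else ⟨p.1.1 / 2, by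
    obtain ⟨h0, h2⟩ := p.1.2
    constructor
    · positivity
    · linarith⟩

open Filter Set

lemma f82_coe (p : Set.Icc (0 : ℝ) 2 × Fin 2) :
    (f82 p : ℝ) = if p.2 = 0 then (p.1 : ℝ) else (p.1 : ℝ) / 2 := by
  unfold f82; split <;> rfl

lemma uniformity_fin2 : uniformity (Fin 2) = 𝓟 SetRel.id := rfl

lemma S_mem {ε : ℝ} (hε : 0 < ε) :
    {p : (Set.Icc (0:ℝ) 2 × Fin 2) × (Set.Icc (0:ℝ) 2 × Fin 2) |
      dist p.1.1 p.2.1 < ε ∧ p.1.2 = p.2.2} ∈ uniformity (Set.Icc (0:ℝ) 2 × Fin 2) := by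
  rw [uniformity_prod]
  have h1 : {p : (Set.Icc (0:ℝ) 2 × Fin 2) × (Set.Icc (0:ℝ) 2 × Fin 2) |
      dist p.1.1 p.2.1 < ε} ∈
      (uniformity (Set.Icc (0:ℝ) 2)).comap
        (fun p : (Set.Icc (0:ℝ) 2 × Fin 2) × (Set.Icc (0:ℝ) 2 × Fin 2) => (p.1.1, p.2.1)) :=
    Filter.preimage_mem_comap (Metric.dist_mem_uniformity hε)
  have h2 : {p : (Set.Icc (0:ℝ) 2 × Fin 2) × (Set.Icc (0:ℝ) 2 × Fin 2) |
      p.1.2 = p.2.2} ∈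
      (uniformity (Fin 2)).comap
        (fun p : (Set.Icc (0:ℝ) 2 × Fin 2) × (Set.Icc (0:ℝ) 2 × Fin 2) => (p.1.2, p.2.2)) := by
    rw [uniformity_fin2]
    exact Filter.preimage_mem_comap (Filter.mem_principal_self _)
  exact Filter.inter_mem (Filter.mem_inf_of_left h1) (Filter.mem_inf_of_right h2)

/-- For `X = [0,2] × ℤ₂` (product metric uniformity, `ℤ₂` discrete) and
`f : X → [0,2]` with `f(q,0) = q`, `f(q,1) = q/2`: `f` is a uniformly continuous
surjection, `f` is bi-uniformly continuous (images of entourages are entourages),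
`[0,2] × {1}` is uniformly open in `X`, yet its image `f([0,2] × {1}) = [0,1]` is
not open in `[0,2]`. -/
theorem biuniform_image_of_uniformlyOpen_not_open :
    (Function.Surjective f82 ∧ UniformContinuous f82) ∧
    (∀ E ∈ uniformity (Set.Icc (0 : ℝ) 2 × Fin 2),
      Prod.map f82 f82 '' E ∈ uniformity (Set.Icc (0 : ℝ) 2)) ∧
    UniformlyOpen {p : Set.Icc (0 : ℝ) 2 × Fin 2 | p.2 = 1} ∧
    (f82 '' {p : Set.Icc (0 : ℝ) 2 × Fin 2 | p.2 = 1} =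
        {q : Set.Icc (0 : ℝ) 2 | (q : ℝ) ∈ Set.Icc (0 : ℝ) 1} ∧
      ¬ IsOpen (f82 '' {p : Set.Icc (0 : ℝ) 2 × Fin 2 | p.2 = 1})) := by
  have himg : f82 '' {p : Set.Icc (0 : ℝ) 2 × Fin 2 | p.2 = 1} =
      {q : Set.Icc (0 : ℝ) 2 | (q : ℝ) ∈ Set.Icc (0 : ℝ) 1} := by
    ext q
    constructor
    · rintro ⟨⟨a, i⟩, hi, rfl⟩
      simp only [Set.mem_setOf_eq] at hi
      subst hi
      have h := f82_coe (a, 1)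
      norm_num at h
      obtain ⟨h0, h2⟩ := a.2
      simp only [Set.mem_setOf_eq, Set.mem_Icc, h]
      constructor <;> [positivity; linarith]
    · intro hq
      rw [Set.mem_setOf_eq, Set.mem_Icc] at hq
      have hm : (2 * (q:ℝ)) ∈ Set.Icc (0:ℝ) 2 := ⟨by linarith [hq.1], by linarith [hq.2]⟩
      refine ⟨(⟨2 * q, hm⟩, 1), rfl, ?_⟩
      apply Subtype.ext
      rw [f82_coe]
      norm_num
  refine ⟨⟨?_, ?_⟩, ?_, ?_, himg, ?_⟩
  · -- surjective
    intro q
    refine ⟨(q, 0), ?_⟩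
    apply Subtype.ext
    rw [f82_coe]
    norm_num
  · -- uniformly continuous
    rw [UniformContinuous, Filter.tendsto_def]
    intro V hV
    obtain ⟨ε, hε, hV'⟩ := Metric.mem_uniformity_dist.1 hV
    filter_upwards [S_mem hε] with p hp
    obtain ⟨hd, he⟩ := hp
    apply hV'
    rw [Subtype.dist_eq] at hd ⊢
    rw [f82_coe, f82_coe, ← he]
    rcases (by omega : p.1.2 = 0 ∨ p.1.2 = 1) with h | h <;> simp only [h] <;> norm_num
    · exact hd
    · rw [Real.dist_eq] at hd ⊢
      have : |(p.1.1 : ℝ) / 2 - (p.2.1 : ℝ) / 2| = |(p.1.1 : ℝ) - (p.2.1 : ℝ)| / 2 := by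
        rw [show ((p.1.1 : ℝ) / 2 - (p.2.1 : ℝ) / 2) = ((p.1.1 : ℝ) - (p.2.1 : ℝ)) / 2 from by
          ring, abs_div]
        norm_num
      rw [this]
      linarith [abs_nonneg ((p.1.1 : ℝ) - (p.2.1 : ℝ))]
  · -- images of entourages are entourages
    intro E hE
    rw [uniformity_prod, Filter.mem_inf_iff_superset] at hE
    obtain ⟨t, ht, u, hu, htu⟩ := hE
    rw [Filter.mem_comap] at ht hu
    obtain ⟨A, hA, hAt⟩ := ht
    obtain ⟨B, hB, hBu⟩ := hu
    rw [uniformity_fin2, Filter.mem_principal] at hB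
    obtain ⟨ε, hε, hA'⟩ := Metric.mem_uniformity_dist.1 hA
    refine Filter.mem_of_superset (Metric.dist_mem_uniformity hε) ?_
    rintro ⟨x, y⟩ hxy
    refine ⟨((x, 0), (y, 0)), htu ⟨hAt (hA' hxy), hBu (hB rfl)⟩, ?_⟩
    simp [Prod.map, f82]
  · -- uniformly open
    refine ⟨{p | p.1.2 = p.2.2}, ?_, ?_⟩
    · rw [uniformity_prod]
      refine Filter.mem_inf_of_right ?_
      rw [uniformity_fin2]
      exact Filter.preimage_mem_comap (Filter.mem_principal_self _)
    · intro a ha y hy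
      simp only [Set.mem_setOf_eq] at *
      rw [← hy]
      exact ha
  · -- not open
    rw [himg]
    intro hopen
    have h1 : (⟨1, by norm_num⟩ : Set.Icc (0:ℝ) 2) ∈
        {q : Set.Icc (0 : ℝ) 2 | (q : ℝ) ∈ Set.Icc (0 : ℝ) 1} := by
      simp
    obtain ⟨ε, hε, hball⟩ := Metric.isOpen_iff.1 hopen _ h1
    have h2 : (0:ℝ) ≤ min (1 + ε/2) 2 := le_min (by linarith) (by norm_num)
    set t : Set.Icc (0:ℝ) 2 := ⟨min (1 + ε/2) 2, h2, min_le_right _ _⟩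
    have ht1 : (1:ℝ) < (t : ℝ) := lt_min (by linarith) (by norm_num)
    have htb : t ∈ Metric.ball (⟨1, by norm_num⟩ : Set.Icc (0:ℝ) 2) ε := by
      rw [Metric.mem_ball, Subtype.dist_eq, Real.dist_eq]
      have hle : (t:ℝ) ≤ 1 + ε/2 := min_le_left _ _
      have hc : ((⟨1, by norm_num⟩ : Set.Icc (0:ℝ) 2) : ℝ) = 1 := rfl
      rw [hc, abs_of_pos (by linarith)]
      linarith
    have := hball htb
    simp only [Set.mem_setOf_eq, Set.mem_Icc] at this
    linarith [this.2]
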